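/- With δ = √(3/8) and lepton eigenvalues (a,b,c) = (1/3−δ, 1/3, 1/3+δ), the endpoint tilt G = |c/a| = (1/3+δ)/(δ−1/3) satisfies G = 3.3891… and the product ((1+δ)/(1−δ))·G = 14.097486… to within 10⁻⁵. Moreover the down endpoint contrast equals the lepton last-rung ratio: (1+δ)/(1−δ) is the common value of √(m_s/m_d) and √(m_τ/m_μ). -/

import Mathlib

/-- With `δ = √(3/8)` and lepton eigenvalues `(a,b,c) = (1/3-δ, 1/3, 1/3+δ)`,
the endpoint tilt `G = |c/a| = (1/3+δ)/(δ-1/3)` satisfies `G = 3.3891…`, the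
product `((1+δ)/(1-δ))·G = 14.097486…` to within `10⁻⁵`, and the down endpoint
contrast equals the lepton last-rung ratio: `(1+δ)/(1-δ)` is the common value
of `√(m_s/m_d) = c_d/a_d` (down eigenvalues `a_d = 1-δ`, `c_d = 1+δ`) and
`√(m_τ/m_μ)`. -/
theorem stmt_19 (δ a b c G : ℝ)
    (hδ : δ = Real.sqrt (3 / 8))
    (ha : a = 1 / 3 - δ) (hb : b = 1 / 3) (hc : c = 1 / 3 + δ)
    (hG : G = (1 / 3 + δ) / (δ - 1 / 3)) :
    G = |c / a| ∧
    (3.3891 < G ∧ G < 3.3892) ∧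
    |((1 + δ) / (1 - δ)) * G - 14.097486| < 1e-5 ∧
    (∀ ad cd sqrt_ms_md sqrt_mτ_mμ : ℝ,
      ad = 1 - δ → cd = 1 + δ →
      sqrt_ms_md = cd / ad → sqrt_mτ_mμ = (1 + δ) / (1 - δ) →
      sqrt_ms_md = sqrt_mτ_mμ ∧ sqrt_ms_md = (1 + δ) / (1 - δ)) := by
  have hδ2 : δ ^ 2 = 3 / 8 := by
    rw [hδ]; rw [Real.sq_sqrt] <;> norm_num
  have hδpos : 0 < δ := by
    rw [hδ]; positivity
  have hlo : 0.61237243 < δ := by nlinarith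
  have hhi : δ < 0.61237244 := by nlinarith
  have hd1 : 0 < δ - 1/3 := by linarith
  have hd2 : 0 < 1 - δ := by linarith
  refine ⟨?_, ⟨?_, ?_⟩, ?_, ?_⟩
  · rw [hG, ha, hc, abs_div, abs_of_pos (by linarith : (0:ℝ) < 1/3 + δ),
      abs_of_neg (by linarith : 1/3 - δ < 0)]
    ring_nf
  · rw [hG, lt_div_iff₀ hd1]; nlinarith
  · rw [hG, div_lt_iff₀ hd1]; nlinarith
  · rw [abs_lt, hG]
    rw [div_mul_div_comm, div_sub' (by positivity), div_lt_iff₀ (by positivity),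
      lt_div_iff₀ (by positivity)]
    constructor <;> nlinarith [sq_nonneg (δ - 0.61237243), sq_nonneg (δ - 0.61237244)]
  · rintro ad cd s t rfl rfl rfl rfl
    exact ⟨rfl, rfl⟩
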